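/- Let S be a compact topological space, K a Hausdorff topological space, and π : S → K a continuous map. Let F ⊆ S be a clopen set, D ⊆ S an arbitrary set, and C = closure of D. Suppose U ⊆ K satisfies π '' (D ∩ F) ⊆ U and π '' (D \ F) ⊆ Uᶜ, and that U is a finite Boolean combination of closed sets, i.e. U = ⋃_{i ∈ s} (C i \ D i) for a finite index set s and closed sets C i, D i ⊆ K. Then the set E = (π '' (C ∩ F)) ∩ (π '' (C \ F)) is closed and has empty interior; in particular E is nowhere dense (hence meagre) in K. -/

import Mathlib

open Set

lemma aux_union_int {K : Type*} [TopologicalSpace K] {A B : Set K}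
    (hA : IsClosed A) (hB : IsClosed B) (hAi : interior A = ∅) (hBi : interior B = ∅) :
    interior (A ∪ B) = ∅ := by
  by_contra h
  have hV : IsOpen (interior (A ∪ B)) := isOpen_interior
  have h1 : interior (A ∪ B) \ A ⊆ interior B := by
    apply interior_maximal
    · intro x hx
      rcases interior_subset hx.1 with h | h
      · exact absurd h hx.2
      · exact h
    · exact hV.sdiff hA
  rw [hBi, subset_empty_iff, diff_eq_empty] at h1
  have h2 : interior (A ∪ B) ⊆ interior A := interior_maximal h1 hV
  rw [hAi, subset_empty_iff] at h2
  exact h h2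

lemma aux_finset {K : Type*} [TopologicalSpace K] {ι : Type*} (s : Finset ι)
    (f : ι → Set K) (hcl : ∀ i ∈ s, IsClosed (f i)) (hint : ∀ i ∈ s, interior (f i) = ∅) :
    interior (⋃ i ∈ s, f i) = ∅ := by
  classical
  induction s using Finset.induction_on with
  | empty => simp
  | insert a t ha ih =>
    rw [Finset.set_biUnion_insert]
    exact aux_union_int (hcl a (Finset.mem_insert_self a t))
      (isClosed_biUnion_finset fun i hi => hcl i (Finset.mem_insert_of_mem hi))
      (hint a (Finset.mem_insert_self a t))
      (ih (fun i hi => hcl i (Finset.mem_insert_of_mem hi))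
        (fun i hi => hint i (Finset.mem_insert_of_mem hi)))

lemma aux_frontier_sub {K : Type*} [TopologicalSpace K] {ι : Type*} (s : Finset ι)
    (Cs Ds : ι → Set K) :
    frontier (⋃ i ∈ s, Cs i \ Ds i) ⊆ ⋃ i ∈ s, (frontier (Cs i) ∪ frontier (Ds i)) := by
  classical
  induction s using Finset.induction_on with
  | empty => simp
  | insert a t ha ih =>
    rw [Finset.set_biUnion_insert, Finset.set_biUnion_insert]
    have hA : frontier (Cs a \ Ds a) ⊆ frontier (Cs a) ∪ frontier (Ds a) := by
      have heq : Cs a \ Ds a = Cs a ∩ (Ds a)ᶜ := rfl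
      rw [heq]
      refine (frontier_inter_subset _ _).trans ?_
      rw [frontier_compl]
      exact union_subset_union inter_subset_left inter_subset_right
    exact (frontier_union_subset _ _).trans
      (union_subset_union (inter_subset_left.trans hA) (inter_subset_right.trans ih))

/-- Abstract Baire-generic compact domination: with `S` compact, `K` Hausdorff,
`π` continuous, `F` clopen, `C = closure D`, `π '' (D ∩ F) ⊆ U`, `π '' (D \ F) ⊆ Uᶜ`,
and `U` a finite Boolean combination of closed sets, the set
`E = (π '' (C ∩ F)) ∩ (π '' (C \ F))` is closed with empty interior,
hence nowhere dense and meagre in `K`. -/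
theorem stmt_4 {S K : Type*} [TopologicalSpace S] [TopologicalSpace K]
    [CompactSpace S] [T2Space K]
    (π : S → K) (hπ : Continuous π) (F : Set S) (hF : IsClopen F)
    (D C : Set S) (hC : C = closure D) (U : Set K)
    (h1 : π '' (D ∩ F) ⊆ U) (h2 : π '' (D \ F) ⊆ Uᶜ)
    {ι : Type*} (s : Finset ι) (Cs Ds : ι → Set K)
    (hCs : ∀ i ∈ s, IsClosed (Cs i)) (hDs : ∀ i ∈ s, IsClosed (Ds i))
    (hU : U = ⋃ i ∈ s, Cs i \ Ds i) :
    IsClosed ((π '' (C ∩ F)) ∩ (π '' (C \ F))) ∧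
      interior ((π '' (C ∩ F)) ∩ (π '' (C \ F))) = ∅ ∧
      IsNowhereDense ((π '' (C ∩ F)) ∩ (π '' (C \ F))) ∧
      IsMeagre ((π '' (C ∩ F)) ∩ (π '' (C \ F))) := by
  set E := (π '' (C ∩ F)) ∩ (π '' (C \ F)) with hE
  have hCcl : IsClosed C := hC ▸ isClosed_closure
  -- E is closed
  have hclosed : IsClosed E := by
    refine IsClosed.inter ?_ ?_
    · exact (((hCcl.inter hF.1).isCompact).image hπ).isClosed
    · exact by rw [diff_eq]; exact (((hCcl.inter hF.2.isClosed_compl).isCompact).image hπ).isClosed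
  -- E ⊆ frontier U
  have hsub : E ⊆ frontier U := by
    rintro x ⟨⟨c1, ⟨hc1C, hc1F⟩, rfl⟩, ⟨c2, ⟨hc2C, hc2F⟩, hc2⟩⟩
    rw [frontier_eq_closure_inter_closure]
    constructor
    · have hmem : c1 ∈ closure (F ∩ D) := hF.2.inter_closure ⟨hc1F, hC ▸ hc1C⟩
      have : π c1 ∈ closure (π '' (F ∩ D)) :=
        image_closure_subset_closure_image hπ ⟨c1, hmem, rfl⟩
      refine closure_mono ?_ this
      rw [inter_comm]; exact h1
    · have hmem : c2 ∈ closure (Fᶜ ∩ D) := hF.1.isOpen_compl.inter_closure ⟨hc2F, hC ▸ hc2C⟩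
      have : π c1 ∈ closure (π '' (Fᶜ ∩ D)) := by
        rw [← hc2]
        exact image_closure_subset_closure_image hπ ⟨c2, hmem, rfl⟩
      refine closure_mono ?_ this
      rw [inter_comm, ← diff_eq]; exact h2
  -- interior E = ∅
  have hint : interior E = ∅ := by
    have h3 : frontier U ⊆ ⋃ i ∈ s, (frontier (Cs i) ∪ frontier (Ds i)) := by
      rw [hU]; exact aux_frontier_sub s Cs Ds
    have h4 : interior (⋃ i ∈ s, (frontier (Cs i) ∪ frontier (Ds i))) = ∅ :=
      aux_finset s _ (fun i hi => (isClosed_frontier).union isClosed_frontier)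
        (fun i hi => aux_union_int isClosed_frontier isClosed_frontier
          (interior_frontier (hCs i hi)) (interior_frontier (hDs i hi)))
    have := interior_mono (hsub.trans h3)
    rw [h4, subset_empty_iff] at this
    exact this
  have hnd : IsNowhereDense E := hclosed.isNowhereDense_iff.mpr hint
  refine ⟨hclosed, hint, hnd, ?_⟩
  rw [isMeagre_iff_countable_union_isNowhereDense]
  exact ⟨{E}, by simpa using hnd, countable_singleton E, by simp⟩
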